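/- Let A be a real number with −1/108 < A < 0. Then the cubic equation A + Δ² − 4Δ³ = 0 has exactly three distinct real roots, and exactly two of them lie in the open interval (0, 1/2). -/

import Mathlib

open Polynomial

/-- For `−1/108 < A < 0`, the cubic `A + Δ² − 4Δ³ = 0` has exactly three distinct
real roots, exactly two of which lie in the open interval `(0, 1/2)`. -/
theorem stmt_2 (A : ℝ) (h₁ : -(1/108) < A) (h₂ : A < 0) :
    {x : ℝ | A + x ^ 2 - 4 * x ^ 3 = 0}.ncard = 3 ∧
    ({x : ℝ | A + x ^ 2 - 4 * x ^ 3 = 0} ∩ Set.Ioo 0 (1/2)).ncard = 2 := by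
  set f : ℝ → ℝ := fun x => A + x ^ 2 - 4 * x ^ 3 with hf
  set S : Set ℝ := {x : ℝ | A + x ^ 2 - 4 * x ^ 3 = 0} with hS
  set P : Polynomial ℝ := C A + X ^ 2 - 4 * X ^ 3 with hP
  have hPne : P ≠ 0 := by
    intro h
    have := congrArg (fun q => q.coeff 3) h
    simp [hP, coeff_X_pow] at this
  have hdeg : P.natDegree ≤ 3 := by
    rw [hP]; compute_degree
  have hSroots : S = ↑P.roots.toFinset := by
    ext x
    simp [hS, hP, Polynomial.mem_roots, hPne, Polynomial.IsRoot, Polynomial.eval_add,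
      Polynomial.eval_sub, Polynomial.eval_pow, Polynomial.eval_mul]
    exact fun _ => hPne
  have hfin : S.Finite := by rw [hSroots]; exact (P.roots.toFinset : Finset ℝ).finite_toSet
  have hcard3 : S.ncard ≤ 3 := by
    rw [hSroots, Set.ncard_coe_finset]
    calc P.roots.toFinset.card ≤ Multiset.card P.roots := P.roots.toFinset_card_le
      _ ≤ P.natDegree := P.card_roots'
      _ ≤ 3 := hdeg
  have hcont : ∀ a b : ℝ, ContinuousOn f (Set.Icc a b) := by
    intro a b; fun_prop
  -- values at sample points
  have hv0 : f 0 = A := by simp [hf]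
  have hvm : (0:ℝ) < f (-(1/2)) := by simp only [hf]; nlinarith
  have hv6 : (0:ℝ) < f (1/6) := by simp only [hf]; nlinarith
  have hv2 : f (1/2) < 0 := by simp only [hf]; nlinarith
  -- root 1 in (-1/2, 0)
  obtain ⟨r₁, hr₁mem, hr₁⟩ : ∃ r ∈ Set.Ioo (-(1/2):ℝ) 0, f r = 0 := by
    have := intermediate_value_Ioo' (by norm_num : (-(1/2):ℝ) ≤ 0) (hcont _ _)
    have h0 : (0:ℝ) ∈ Set.Ioo (f 0) (f (-(1/2))) := by
      constructor <;> [rw [hv0]; skip] <;> [exact h₂; exact hvm]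
    obtain ⟨r, hr, hfr⟩ := this h0
    exact ⟨r, hr, hfr⟩
  -- root 2 in (0, 1/6)
  obtain ⟨r₂, hr₂mem, hr₂⟩ : ∃ r ∈ Set.Ioo (0:ℝ) (1/6), f r = 0 := by
    have := intermediate_value_Ioo (by norm_num : (0:ℝ) ≤ 1/6) (hcont _ _)
    have h0 : (0:ℝ) ∈ Set.Ioo (f 0) (f (1/6)) := by
      constructor <;> [rw [hv0]; skip] <;> [exact h₂; exact hv6]
    obtain ⟨r, hr, hfr⟩ := this h0
    exact ⟨r, hr, hfr⟩
  -- root 3 in (1/6, 1/2)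
  obtain ⟨r₃, hr₃mem, hr₃⟩ : ∃ r ∈ Set.Ioo ((1:ℝ)/6) (1/2), f r = 0 := by
    have := intermediate_value_Ioo' (by norm_num : ((1:ℝ)/6) ≤ 1/2) (hcont _ _)
    have h0 : (0:ℝ) ∈ Set.Ioo (f (1/2)) (f (1/6)) := ⟨hv2, hv6⟩
    obtain ⟨r, hr, hfr⟩ := this h0
    exact ⟨r, hr, hfr⟩
  have h12 : r₁ ≠ r₂ := ne_of_lt (lt_trans hr₁mem.2 hr₂mem.1)
  have h23 : r₂ ≠ r₃ := ne_of_lt (lt_trans hr₂mem.2 hr₃mem.1)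
  have h13 : r₁ ≠ r₃ := ne_of_lt (lt_trans hr₁mem.2 (lt_trans hr₂mem.1 (lt_trans hr₂mem.2 hr₃mem.1)))
  have hsub : ({r₁, r₂, r₃} : Set ℝ) ⊆ S := by
    intro x hx
    rcases hx with h | h | h <;> subst h <;> exact (by assumption : f _ = 0)
  have hcardT : ({r₁, r₂, r₃} : Set ℝ).ncard = 3 := by
    rw [Set.ncard_insert_of_notMem (by simp [h12, h13]),
        Set.ncard_insert_of_notMem (by simp [h23]), Set.ncard_singleton]
  have hSeq : ({r₁, r₂, r₃} : Set ℝ) = S :=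
    Set.eq_of_subset_of_ncard_le hsub (by rw [hcardT]; exact hcard3) hfin
  constructor
  · rw [← hSeq, hcardT]
  · have hinter : S ∩ Set.Ioo 0 (1/2) = ({r₂, r₃} : Set ℝ) := by
      rw [← hSeq]
      ext x
      simp only [Set.mem_inter_iff, Set.mem_insert_iff, Set.mem_singleton_iff, Set.mem_Ioo]
      constructor
      · rintro ⟨h | h | h, hx0, hx2⟩
        · exfalso; subst h; exact absurd hx0 (not_lt.2 (le_of_lt hr₁mem.2))
        · exact Or.inl h
        · exact Or.inr h
      · rintro (h | h) <;> subst h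
        · exact ⟨Or.inr (Or.inl rfl), hr₂mem.1, lt_trans hr₂mem.2 (by linarith [hr₃mem.1, hr₃mem.2] : (1:ℝ)/6 < 1/2)⟩
        · exact ⟨Or.inr (Or.inr rfl), lt_trans (by norm_num : (0:ℝ) < 1/6) hr₃mem.1, hr₃mem.2⟩
    rw [hinter, Set.ncard_pair h23]
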